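/- Let V be the composition operator (V f)(x) = φ(x) f(ψ(x)) where ψ is holomorphic on a disk mapping it strictly inside itself with unique fixed point x̄ satisfying |ψ'(x̄)| < 1. If A ∈ SL(2,ℤ) is the Möbius matrix corresponding to a word (P_{0,q})^{n₁}(P_{1,q})^{n₂}⋯ of total length n > 1 containing at least one P_{1,q} factor, with trace T = trace(A), then T > 2 and trace of the corresponding composition operator equals (T²-4)^(-1/2) (2/(T+√(T²-4)))^(2q-1). -/

import Mathlib

open Matrix

lemma word_entries : ∀ (w : List Bool), w ≠ [] →
    let P := (w.map (fun b => if b then !![0, 1; 1, 1] else (!![1, 0; 1, 1] : Matrix (Fin 2) (Fin 2) ℤ))).prod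
    1 ≤ P 1 0 ∧ 1 ≤ P 1 1 ∧ 0 ≤ P 0 0 ∧ 0 ≤ P 0 1 ∧ 1 ≤ P 0 0 + P 0 1 ∧
      (true ∈ w → 1 ≤ P 0 1) := by
  intro w
  induction w with
  | nil => simp
  | cons m t ih =>
    intro _
    rcases t.eq_nil_or_concat with h | _
    · subst h
      cases m <;> simp [Matrix.mul_apply, Fin.sum_univ_two]
    · have ht : t ≠ [] := by rintro rfl; simp_all
      obtain ⟨h1, h2, h3, h4, h5, h6⟩ := ih ht
      simp only [List.map_cons, List.prod_cons, Matrix.mul_apply, Fin.sum_univ_two,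
        List.mem_cons] at *
      cases m <;> simp_all <;> constructor <;> omega



lemma analytic_part (q : ℂ) (a b c d : ℤ) (hb : 1 ≤ b) (hc : 1 ≤ c) (hd : 1 ≤ d)
    (hdet : a * d - b * c = 1) (hT : 2 < a + d)
    (ψ : ℂ → ℂ) (hψ : ψ = fun x => ((a : ℂ) * x + (b : ℂ)) / ((c : ℂ) * x + (d : ℂ)))
    (x₀ : ℂ) (hfix : ψ x₀ = x₀) (hattr : ‖deriv ψ x₀‖ < 1) :
    (deriv ψ x₀) ^ q / (1 - deriv ψ x₀)
      = (((a + d : ℤ) : ℂ) ^ 2 - 4) ^ (-(1/2 : ℂ)) *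
          (2 / (((a + d : ℤ) : ℂ) + (((a + d : ℤ) : ℂ) ^ 2 - 4) ^ ((1:ℂ)/2))) ^ (2 * q - 1) := by
  have hdC : ((d : ℂ)) ≠ 0 := by exact_mod_cast (by omega : (d:ℤ) ≠ 0)
  have hdetC : (a : ℂ) * d - b * c = 1 := by exact_mod_cast hdet
  -- denominator nonzero
  have hu0 : (c : ℂ) * x₀ + d ≠ 0 := by
    intro h
    rw [hψ] at hfix
    simp only at hfix
    rw [h, div_zero] at hfix
    rw [← hfix] at h
    simp at h
    omega
  -- fixed point equation
  have hfix' : (a : ℂ) * x₀ + b = x₀ * ((c : ℂ) * x₀ + d) := by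
    rw [hψ] at hfix
    simp only at hfix
    rw [div_eq_iff hu0] at hfix
    linear_combination hfix
  -- derivative
  have hderiv : deriv ψ x₀ = ((c : ℂ) * x₀ + d)⁻¹ ^ 2 := by
    have h1 : HasDerivAt (fun x : ℂ => (a : ℂ) * x + b) a x₀ := by
      simpa using ((hasDerivAt_id x₀).const_mul (a : ℂ)).add_const (b : ℂ)
    have h2 : HasDerivAt (fun x : ℂ => (c : ℂ) * x + d) c x₀ := by
      simpa using ((hasDerivAt_id x₀).const_mul (c : ℂ)).add_const (d : ℂ)
    have h3 := (h1.div h2 hu0).deriv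
    rw [hψ]
    rw [show (fun x : ℂ => ((a:ℂ) * x + b) / ((c:ℂ) * x + d)) = ((fun x : ℂ => (a : ℂ) * x + b) / fun x : ℂ => (c : ℂ) * x + d) from rfl, h3]
    have hnum : (a:ℂ) * ((c:ℂ) * x₀ + d) - ((a:ℂ) * x₀ + b) * c = 1 := by
      linear_combination hdetC
    rw [hnum, one_div, inv_pow]
  -- the quadratic equation for u
  have hroot : ((c:ℂ) * x₀ + d) ^ 2 - ((a:ℂ) + d) * ((c:ℂ) * x₀ + d) + 1 = 0 := by
    linear_combination (-(c:ℂ)) * hfix' - hdetC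
  -- real eigenvalue data
  set T : ℝ := ((a + d : ℤ) : ℝ) with hTdef
  have hT3 : (3 : ℝ) ≤ T := by
    have h3 : (3 : ℤ) ≤ a + d := by omega
    rw [hTdef]; exact_mod_cast h3
  set s : ℝ := Real.sqrt (T ^ 2 - 4) with hsdef
  have hs2 : s ^ 2 = T ^ 2 - 4 := Real.sq_sqrt (by nlinarith)
  have hs0 : 0 < s := Real.sqrt_pos.mpr (by nlinarith)
  set lam : ℝ := (T + s) / 2 with hlamdef
  have hlam1 : 1 < lam := by rw [hlamdef]; nlinarith
  have hlam0 : (0:ℝ) < lam := by linarith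
  have hmul : lam * ((T - s) / 2) = 1 := by
    rw [hlamdef]; linear_combination (-1/4 : ℝ) * hs2
  have hlaminv : lam⁻¹ = (T - s) / 2 := inv_eq_of_mul_eq_one_right hmul
  have hsum : lam + lam⁻¹ = T := by rw [hlaminv, hlamdef]; ring
  have hdiff : lam - lam⁻¹ = s := by rw [hlaminv, hlamdef]; ring
  have hTC : ((a:ℂ) + d) = ((T : ℝ) : ℂ) := by rw [hTdef]; push_cast; ring
  -- u is lam or lam⁻¹
  have hfact : (((c:ℂ) * x₀ + d) - (lam : ℂ)) * (((c:ℂ) * x₀ + d) - ((lam⁻¹ : ℝ) : ℂ)) = 0 := by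
    have h1 : ((lam : ℝ) : ℂ) * ((lam⁻¹ : ℝ) : ℂ) = 1 := by
      rw [← Complex.ofReal_mul, mul_inv_cancel₀ (ne_of_gt hlam0), Complex.ofReal_one]
    have h2 : ((lam : ℝ) : ℂ) + ((lam⁻¹ : ℝ) : ℂ) = ((T : ℝ) : ℂ) := by
      exact_mod_cast congrArg (Complex.ofReal) hsum
    calc (((c:ℂ) * x₀ + d) - (lam : ℂ)) * (((c:ℂ) * x₀ + d) - ((lam⁻¹ : ℝ) : ℂ))
        = ((c:ℂ) * x₀ + d) ^ 2 - ((a:ℂ) + d) * ((c:ℂ) * x₀ + d) + 1 := by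
          rw [hTC]
          linear_combination (-((c:ℂ) * x₀ + (d:ℂ))) * h2 + h1
      _ = 0 := hroot
  have hu : (c:ℂ) * x₀ + d = (lam : ℂ) := by
    rcases mul_eq_zero.mp hfact with h | h
    · exact sub_eq_zero.mp h
    · exfalso
      have huval : (c:ℂ) * x₀ + d = ((lam⁻¹ : ℝ) : ℂ) := sub_eq_zero.mp h
      rw [hderiv, huval] at hattr
      have : (((lam⁻¹ : ℝ) : ℂ))⁻¹ ^ 2 = (((lam ^ 2 : ℝ)) : ℂ) := by
        push_cast
        rw [inv_inv]
      rw [this] at hattr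
      rw [Complex.norm_real, Real.norm_eq_abs, abs_of_pos (by positivity)] at hattr
      nlinarith
  -- the multiplier μ
  have hmu : deriv ψ x₀ = (((lam ^ 2)⁻¹ : ℝ) : ℂ) := by
    rw [hderiv, hu]; push_cast; rw [inv_pow]
  set μ : ℝ := (lam ^ 2)⁻¹ with hmudef
  have hμpos : 0 < μ := by rw [hmudef]; positivity
  have hμlt : μ < 1 := by
    rw [hmudef]
    rw [inv_lt_one_iff₀]
    right; nlinarith
  set L : ℝ := Real.log lam with hLdef
  have hlogμ : Real.log μ = -(2 * L) := by
    rw [hmudef, Real.log_inv, Real.log_pow, hLdef]; push_cast; ring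
  have hloglaminv : Real.log lam⁻¹ = -L := by rw [Real.log_inv, hLdef]
  have hcpow1 : ((μ : ℝ) : ℂ) ^ q = Complex.exp (((-(2 * L) : ℝ) : ℂ) * q) := by
    rw [Complex.cpow_def_of_ne_zero (by exact_mod_cast ne_of_gt hμpos),
      ← Complex.ofReal_log hμpos.le, hlogμ]
  have hcpow2 : ((lam⁻¹ : ℝ) : ℂ) ^ (2 * q - 1)
      = Complex.exp (((-L : ℝ) : ℂ) * (2 * q - 1)) := by
    rw [Complex.cpow_def_of_ne_zero (by exact_mod_cast (inv_pos.mpr hlam0).ne'),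
      ← Complex.ofReal_log (inv_pos.mpr hlam0).le, hloglaminv]
  have hAC : ((a + d : ℤ) : ℂ) = ((T : ℝ) : ℂ) := by rw [hTdef]; push_cast; ring
  have hbase : ((a + d : ℤ) : ℂ) ^ 2 - 4 = ((s ^ 2 : ℝ) : ℂ) := by
    rw [hAC, hs2]; push_cast; ring
  have hhalf : ((s ^ 2 : ℝ) : ℂ) ^ ((1:ℂ)/2) = ((s : ℝ) : ℂ) := by
    rw [show ((1:ℂ)/2) = ((1/2 : ℝ) : ℂ) by norm_num, ← Complex.ofReal_cpow (by positivity)]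
    norm_cast
    rw [← Real.sqrt_eq_rpow, Real.sqrt_sq hs0.le]
  have hneg : ((s ^ 2 : ℝ) : ℂ) ^ (-(1/2 : ℂ)) = ((s : ℝ) : ℂ)⁻¹ := by
    rw [Complex.cpow_neg, hhalf]
  have hs2C : ((s : ℝ) : ℂ) ^ 2 = ((T : ℝ) : ℂ) ^ 2 - 4 := by
    have := congrArg (Complex.ofReal) hs2
    push_cast at this
    exact this
  have hfrac : (2 : ℂ) / (((T : ℝ) : ℂ) + ((s : ℝ) : ℂ)) = ((lam⁻¹ : ℝ) : ℂ) := by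
    have hne : (((T : ℝ) : ℂ) + ((s : ℝ) : ℂ)) ≠ 0 := by
      rw [← Complex.ofReal_add]
      exact_mod_cast (by linarith : (0:ℝ) < T + s).ne'
    rw [div_eq_iff hne, hlaminv]
    push_cast
    linear_combination (1/2 : ℂ) * hs2C
  rw [hmu, hbase, hneg, hhalf, hAC, hfrac, hcpow1, hcpow2]
  have hexp : Complex.exp (((-L : ℝ) : ℂ) * (2 * q - 1))
      = Complex.exp (((-(2 * L) : ℝ) : ℂ) * q) * Complex.exp (((L : ℝ) : ℂ)) := by
    rw [← Complex.exp_add]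
    congr 1
    push_cast
    ring
  have hexpL : Complex.exp (((L : ℝ) : ℂ)) = ((lam : ℝ) : ℂ) := by
    rw [← Complex.ofReal_exp, hLdef, Real.exp_log hlam0]
  rw [hexp, hexpL]
  have hkey : (1 - μ) * lam = s := by
    rw [hmudef, ← hdiff]
    field_simp
  have hkeyC : ((1 : ℂ) - ((μ : ℝ) : ℂ)) * ((lam : ℝ) : ℂ) = ((s : ℝ) : ℂ) := by
    have := congrArg (Complex.ofReal) hkey
    push_cast at this
    exact this
  have h1μ : (1 : ℂ) - ((μ : ℝ) : ℂ) ≠ 0 := by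
    have : ((1 - μ : ℝ) : ℂ) ≠ 0 := by exact_mod_cast (by linarith : (0:ℝ) < 1 - μ).ne'
    push_cast at this
    exact this
  have hlamC : ((lam : ℝ) : ℂ) ≠ 0 := by exact_mod_cast hlam0.ne'
  rw [← hkeyC]
  field_simp


theorem composition_operator_trace (q : ℂ) (hq : 0 < q.re)
    (w : List Bool) (hlen : 1 < w.length) (hone : true ∈ w)
    (A : Matrix (Fin 2) (Fin 2) ℤ)
    (hA : A = (w.map (fun b => if b then !![0, 1; 1, 1] else !![1, 0; 1, 1])).prod)
    (hdet : A.det = 1)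
    (ψ : ℂ → ℂ)
    (hψ : ψ = fun x => ((A 0 0 : ℂ) * x + (A 0 1 : ℂ)) / ((A 1 0 : ℂ) * x + (A 1 1 : ℂ)))
    (x₀ : ℂ) (hfix : ψ x₀ = x₀) (hattr : ‖deriv ψ x₀‖ < 1) :
    2 < A.trace ∧
      (deriv ψ x₀) ^ q / (1 - deriv ψ x₀)
        = ((A.trace : ℂ) ^ 2 - 4) ^ (-(1/2 : ℂ)) *
            (2 / ((A.trace : ℂ) + ((A.trace : ℂ) ^ 2 - 4) ^ ((1:ℂ)/2))) ^ (2 * q - 1) := by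
  have hw : w ≠ [] := by rintro rfl; simp at hlen
  have hent := word_entries w hw
  simp only at hent
  rw [← hA] at hent
  obtain ⟨h1, h2, h3, h4, h5, h6⟩ := hent
  have hb : 1 ≤ A 0 1 := h6 hone
  rw [Matrix.det_fin_two] at hdet
  have htr : A.trace = A 0 0 + A 1 1 := Matrix.trace_fin_two A
  have hT : 2 < A 0 0 + A 1 1 := by nlinarith [h1, h2, h3, hb, hdet]
  refine ⟨by rw [htr]; exact hT, ?_⟩
  have := analytic_part q (A 0 0) (A 0 1) (A 1 0) (A 1 1) hb h1 h2 hdet hT ψ hψ x₀ hfix hattr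
  rw [htr]
  exact this
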